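/- Let A : 𝔥 → 𝔨, B : 𝔥^⊥ → 𝔨, D : 𝔥^⊥ → 𝔨^⊥ be block entries of a unitary U = [[A,B],[C,D]]. Then for any polynomial Φ with complex coefficients, B* A Φ(A*A) A* B = Φ(D*D)(I − D*D) D*D as operators on 𝔥^⊥. -/

import Mathlib

open ContinuousLinearMap Submodule in
lemma blk_aux {H : Type*} [NormedAddCommGroup H] [InnerProductSpace ℂ H] [CompleteSpace H]
    (K : Submodule ℂ H) [CompleteSpace K]
    (V W : H →L[ℂ] H) (hVW : V ∘L W = 1)
    (L M : Submodule ℂ H) [CompleteSpace L] [CompleteSpace M] :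
    ((orthogonalProjection L ∘L V) ∘L K.subtypeL) ∘L
        ((orthogonalProjection K ∘L W) ∘L M.subtypeL) +
      ((orthogonalProjection L ∘L V) ∘L Kᗮ.subtypeL) ∘L
        ((orthogonalProjection Kᗮ ∘L W) ∘L M.subtypeL) =
      orthogonalProjection L ∘L M.subtypeL := by
  ext y
  have h1 : (K.subtypeL ((orthogonalProjection K) (W (M.subtypeL y))) : H) +
      Kᗮ.subtypeL ((orthogonalProjection Kᗮ) (W (M.subtypeL y))) = W (M.subtypeL y) :=
    K.starProjection_add_starProjection_orthogonal _
  have h2 : V (W (M.subtypeL y)) = M.subtypeL y := by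
    have := congrArg (fun T => T (M.subtypeL y)) hVW
    simpa using this
  simp only [add_apply, comp_apply]
  rw [← map_add, ← map_add, h1, h2]

set_option maxHeartbeats 1000000 in
open ContinuousLinearMap Complex Submodule Polynomial in
theorem stmt5
    {H : Type*} [NormedAddCommGroup H] [InnerProductSpace ℂ H] [CompleteSpace H]
    (𝔥 𝔨 : Submodule ℂ H) [CompleteSpace 𝔥] [CompleteSpace 𝔨]
    (U : H →L[ℂ] H) (hU1 : adjoint U ∘L U = 1) (hU2 : U ∘L adjoint U = 1)
    (A : 𝔥 →L[ℂ] 𝔨) (B : 𝔥ᗮ →L[ℂ] 𝔨) (C : 𝔥 →L[ℂ] 𝔨ᗮ) (D : 𝔥ᗮ →L[ℂ] 𝔨ᗮ)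
    (hA : ∀ x : 𝔥, A x = orthogonalProjection 𝔨 (U x))
    (hB : ∀ y : 𝔥ᗮ, B y = orthogonalProjection 𝔨 (U y))
    (hC : ∀ x : 𝔥, C x = orthogonalProjection 𝔨ᗮ (U x))
    (hD : ∀ y : 𝔥ᗮ, D y = orthogonalProjection 𝔨ᗮ (U y))
    (Φ : Polynomial ℂ) :
    (adjoint B ∘L A) ∘L (Polynomial.aeval (adjoint A ∘L A) Φ ∘L (adjoint A ∘L B)) =
      Polynomial.aeval (adjoint D ∘L D) Φ ∘L ((1 - adjoint D ∘L D) ∘L (adjoint D ∘L D)) := by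
  -- representations
  have hAr : A = (orthogonalProjection 𝔨 ∘L U) ∘L 𝔥.subtypeL := by
    ext x; rw [hA]; rfl
  have hBr : B = (orthogonalProjection 𝔨 ∘L U) ∘L 𝔥ᗮ.subtypeL := by
    ext x; rw [hB]; rfl
  have hCr : C = (orthogonalProjection 𝔨ᗮ ∘L U) ∘L 𝔥.subtypeL := by
    ext x; rw [hC]; rfl
  have hDr : D = (orthogonalProjection 𝔨ᗮ ∘L U) ∘L 𝔥ᗮ.subtypeL := by
    ext x; rw [hD]; rfl
  have hAa : adjoint A = (orthogonalProjection 𝔥 ∘L adjoint U) ∘L 𝔨.subtypeL := by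
    rw [hAr, adjoint_comp, adjoint_comp, Submodule.adjoint_subtypeL,
      Submodule.adjoint_orthogonalProjection, ContinuousLinearMap.comp_assoc]
  have hBa : adjoint B = (orthogonalProjection 𝔥ᗮ ∘L adjoint U) ∘L 𝔨.subtypeL := by
    rw [hBr, adjoint_comp, adjoint_comp, Submodule.adjoint_subtypeL,
      Submodule.adjoint_orthogonalProjection, ContinuousLinearMap.comp_assoc]
  have hCa : adjoint C = (orthogonalProjection 𝔥 ∘L adjoint U) ∘L 𝔨ᗮ.subtypeL := by
    rw [hCr, adjoint_comp, adjoint_comp, Submodule.adjoint_subtypeL,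
      Submodule.adjoint_orthogonalProjection, ContinuousLinearMap.comp_assoc]
  have hDa : adjoint D = (orthogonalProjection 𝔥ᗮ ∘L adjoint U) ∘L 𝔨ᗮ.subtypeL := by
    rw [hDr, adjoint_comp, adjoint_comp, Submodule.adjoint_subtypeL,
      Submodule.adjoint_orthogonalProjection, ContinuousLinearMap.comp_assoc]
  -- block relations
  have r1 : adjoint A ∘L B + adjoint C ∘L D = 0 := by
    rw [hAa, hBr, hCa, hDr, blk_aux 𝔨 (adjoint U) U hU1 𝔥 𝔥ᗮ]
    ext y
    simp only [ContinuousLinearMap.comp_apply, ContinuousLinearMap.zero_apply,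
      Submodule.subtypeL_apply]
    exact congrArg Subtype.val (orthogonalProjection_mem_subspace_orthogonalComplement_eq_zero y.2)
  have r2 : adjoint B ∘L A + adjoint D ∘L C = 0 := by
    rw [hBa, hAr, hDa, hCr, blk_aux 𝔨 (adjoint U) U hU1 𝔥ᗮ 𝔥]
    ext y
    simp only [ContinuousLinearMap.comp_apply, ContinuousLinearMap.zero_apply,
      Submodule.subtypeL_apply]
    exact congrArg Subtype.val (orthogonalProjection_mem_subspace_orthogonalComplement_eq_zero
      (Submodule.le_orthogonal_orthogonal 𝔥 y.2))
  have r5 : A ∘L adjoint C + B ∘L adjoint D = 0 := by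
    rw [hAr, hCa, hBr, hDa, blk_aux 𝔥 U (adjoint U) hU2 𝔨 𝔨ᗮ]
    ext y
    simp only [ContinuousLinearMap.comp_apply, ContinuousLinearMap.zero_apply,
      Submodule.subtypeL_apply]
    exact congrArg Subtype.val (orthogonalProjection_mem_subspace_orthogonalComplement_eq_zero y.2)
  have r4 : C ∘L adjoint C + D ∘L adjoint D = 1 := by
    rw [hCa, hCr, hDa, hDr, blk_aux 𝔥 U (adjoint U) hU2 𝔨ᗮ 𝔨ᗮ]
    ext y
    simp only [ContinuousLinearMap.comp_apply, ContinuousLinearMap.one_apply,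
      Submodule.subtypeL_apply]
    exact congrArg Subtype.val (orthogonalProjection_mem_subspace_eq_self y)
  have e1 : adjoint A ∘L B = -(adjoint C ∘L D) := eq_neg_of_add_eq_zero_left r1
  have e2 : adjoint B ∘L A = -(adjoint D ∘L C) := eq_neg_of_add_eq_zero_left r2
  have e5 : A ∘L adjoint C = -(B ∘L adjoint D) := eq_neg_of_add_eq_zero_left r5
  have e4 : C ∘L adjoint C = 1 - D ∘L adjoint D := eq_sub_of_add_eq r4
  -- intertwining
  have hbase : (adjoint A ∘L A) ∘L (adjoint A ∘L B) =
      (adjoint A ∘L B) ∘L (adjoint D ∘L D) := by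
    calc (adjoint A ∘L A) ∘L (adjoint A ∘L B)
        = -(adjoint A ∘L ((A ∘L adjoint C) ∘L D)) := by
          rw [e1]; simp only [ContinuousLinearMap.comp_neg, ContinuousLinearMap.neg_comp, ContinuousLinearMap.comp_assoc]
      _ = -(adjoint A ∘L ((-(B ∘L adjoint D)) ∘L D)) := by rw [e5]
      _ = (adjoint A ∘L B) ∘L (adjoint D ∘L D) := by
          simp only [ContinuousLinearMap.neg_comp, ContinuousLinearMap.comp_neg, neg_neg, ContinuousLinearMap.comp_assoc]
  have hpow : ∀ n : ℕ, ((adjoint A ∘L A) ^ n) ∘L (adjoint A ∘L B) =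
      (adjoint A ∘L B) ∘L ((adjoint D ∘L D) ^ n) := by
    intro n
    induction n with
    | zero => simp [one_def]
    | succ n ih =>
        rw [pow_succ, pow_succ, ContinuousLinearMap.mul_def, ContinuousLinearMap.mul_def, ContinuousLinearMap.comp_assoc, hbase, ← ContinuousLinearMap.comp_assoc, ih,
          ContinuousLinearMap.comp_assoc]
  have hkey : Polynomial.aeval (adjoint A ∘L A) Φ ∘L (adjoint A ∘L B) =
      (adjoint A ∘L B) ∘L Polynomial.aeval (adjoint D ∘L D) Φ := by
    induction Φ using Polynomial.induction_on' with
    | add p q hp hq => simp only [map_add, ContinuousLinearMap.add_comp, ContinuousLinearMap.comp_add, hp, hq]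
    | monomial n a =>
        rw [aeval_monomial, aeval_monomial, ← Algebra.smul_def, ← Algebra.smul_def,
          ContinuousLinearMap.smul_comp, ContinuousLinearMap.comp_smul, hpow n]
  have hprod : (adjoint B ∘L A) ∘L (adjoint A ∘L B) =
      (1 - adjoint D ∘L D) ∘L (adjoint D ∘L D) := by
    calc (adjoint B ∘L A) ∘L (adjoint A ∘L B)
        = adjoint D ∘L ((C ∘L adjoint C) ∘L D) := by
          rw [e1, e2]; simp only [ContinuousLinearMap.neg_comp, ContinuousLinearMap.comp_neg, neg_neg, ContinuousLinearMap.comp_assoc]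
      _ = adjoint D ∘L ((1 - D ∘L adjoint D) ∘L D) := by rw [e4]
      _ = (1 - adjoint D ∘L D) ∘L (adjoint D ∘L D) := by
          simp only [ContinuousLinearMap.sub_comp, ContinuousLinearMap.comp_sub, ContinuousLinearMap.one_def, ContinuousLinearMap.id_comp, ContinuousLinearMap.comp_id, ContinuousLinearMap.comp_assoc]
  have hcomm : ((1 - adjoint D ∘L D) ∘L (adjoint D ∘L D)) ∘L
      Polynomial.aeval (adjoint D ∘L D) Φ =
      Polynomial.aeval (adjoint D ∘L D) Φ ∘L ((1 - adjoint D ∘L D) ∘L (adjoint D ∘L D)) := by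
    have h : (1 - adjoint D ∘L D) ∘L (adjoint D ∘L D) =
        Polynomial.aeval (adjoint D ∘L D) (((1 : Polynomial ℂ) - Polynomial.X) * Polynomial.X) := by
      rw [map_mul, map_sub, map_one, aeval_X, ContinuousLinearMap.mul_def]
    rw [h, ← ContinuousLinearMap.mul_def, ← ContinuousLinearMap.mul_def, ← map_mul, ← map_mul, mul_comm]
  rw [hkey, ← ContinuousLinearMap.comp_assoc, hprod, hcomm]
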